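/- McBryan–Spencer exponential decay bound for the XY model on a finite graph: let G = (V, E) be a finite graph, β > 0, x, y ∈ V, and suppose a : V → ℝ satisfies |a(u) − a(v)| ≤ 1/10 for every edge {u,v} ∈ E, β·Σ_{\{u,v\}∈E} (a(u)−a(v))² ≤ (a(y)−a(x))/2, and a(y) − a(x) ≥ m. Then |⟨cos(θ_x − θ_y)⟩_β| ≤ e^{−m/2}, where ⟨·⟩_β denotes the Gibbs expectation with Hamiltonian H(θ) = −Σ_{\{u,v\}∈E} cos(θ_u − θ_v) over θ ∈ [0,2π)^V. -/

import Mathlib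

open MeasureTheory

open Classical in
/-- The XY-model Hamiltonian `H(θ) = -Σ_{edges} cos(θ_u - θ_v)`
(each unordered edge counted once via the factor 1/2). -/
noncomputable def xyHamiltonian {V : Type*} [Fintype V] (G : SimpleGraph V)
    (θ : V → ℝ) : ℝ :=
  -((1 / 2) * ∑ u : V, ∑ v : V, if G.Adj u v then Real.cos (θ u - θ v) else 0)

open Classical in
/-- The Dirichlet energy `Σ_{edges} (a u - a v)²` (each unordered edge counted once). -/
noncomputable def edgeEnergy {V : Type*} [Fintype V] (G : SimpleGraph V)
    (a : V → ℝ) : ℝ :=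
  (1 / 2) * ∑ u : V, ∑ v : V, if G.Adj u v then (a u - a v) ^ 2 else 0

open Complex

lemma MS.cosh_le_one_add_sq {q : ℝ} (h : |q| ≤ 1/10) : Real.cosh q ≤ 1 + q ^ 2 := by
  have h1 : Real.cosh q ≤ Real.exp (q ^ 2 / 2) := Real.cosh_le_exp_half_sq q
  have hq2 : q ^ 2 ≤ 1/100 := by
    have := _root_.sq_abs q ▸ pow_le_pow_left₀ (abs_nonneg q) h 2
    nlinarith [_root_.sq_abs q, sq_nonneg q]
  set t := q ^ 2 / 2 with ht
  have ht0 : 0 ≤ t := by positivity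
  have ht1 : t ≤ 1/200 := by simp only [ht]; linarith
  have hexp : Real.exp t ≤ (1 - t)⁻¹ := by
    have h2 : 1 - t ≤ Real.exp (-t) := by linarith [Real.add_one_le_exp (-t)]
    have h3 : 0 < 1 - t := by linarith
    rw [le_inv_comm₀ (Real.exp_pos t) h3] at *
    · calc (1 - t : ℝ) ≤ Real.exp (-t) := h2
        _ = (Real.exp t)⁻¹ := by rw [Real.exp_neg]
  have : (1 - t)⁻¹ ≤ 1 + 2 * t := by
    rw [inv_le_iff_one_le_mul₀ (by linarith)]
    nlinarith
  calc Real.cosh q ≤ Real.exp t := h1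
    _ ≤ (1 - t)⁻¹ := hexp
    _ ≤ 1 + 2 * t := this
    _ = 1 + q ^ 2 := by simp only [ht]; ring

lemma MS.norm_ccos_le (z : ℂ) : ‖Complex.cos z‖ ≤ Real.cosh z.im := by
  rw [show Complex.cos z = (Complex.exp (z * I) + Complex.exp (-z * I)) / 2 by
    rw [← Complex.two_cos]; ring]
  calc ‖(Complex.exp (z * I) + Complex.exp (-z * I)) / 2‖
      ≤ (‖Complex.exp (z * I)‖ + ‖Complex.exp (-z * I)‖) / 2 := by
        rw [norm_div, Complex.norm_two]; gcongr; exact norm_add_le _ _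
    _ = (Real.exp (-z.im) + Real.exp z.im) / 2 := by
        rw [Complex.norm_exp, Complex.norm_exp]; simp [Complex.mul_re]
    _ = Real.cosh z.im := by rw [Real.cosh_eq]; ring

lemma MS.ccos_re (p q : ℝ) : (Complex.cos ((p : ℂ) + (q : ℂ) * I)).re = Real.cos p * Real.cosh q := by
  rw [Complex.cos_add, Complex.cos_mul_I, Complex.sin_mul_I]
  simp [Complex.cos_ofReal_re, Complex.sinh_ofReal_re, Complex.cosh_ofReal_re]


lemma MS.shift_integral (f : ℂ → ℂ) (hf : Differentiable ℂ f)
    (hper : ∀ z : ℂ, f (z + 2 * Real.pi) = f z) (c : ℝ) :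
    ∫ t in Set.Ico (0:ℝ) (2 * Real.pi), f ((t : ℂ) + (c : ℂ) * I)
      = ∫ t in Set.Ico (0:ℝ) (2 * Real.pi), f (t : ℂ) := by
  have h := Complex.integral_boundary_rect_eq_zero_of_differentiableOn f 0
    (⟨2 * Real.pi, c⟩ : ℂ) hf.differentiableOn
  simp only [Complex.zero_re, Complex.zero_im] at h
  have hv : (∫ y_ : ℝ in (0:ℝ)..c, f ((2 * Real.pi : ℝ) + (y_:ℂ) * I))
      = ∫ y_ : ℝ in (0:ℝ)..c, f (((0:ℝ):ℂ) + (y_:ℂ) * I) := by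
    apply intervalIntegral.integral_congr; intro t _
    have := hper ((t : ℂ) * I)
    push_cast
    rw [add_comm]
    simpa using this
  push_cast at h hv ⊢
  rw [hv] at h
  simp only [smul_eq_mul] at h
  have h2 : (∫ x_ : ℝ in (0:ℝ)..(2*Real.pi), f ((x_:ℂ) + (0:ℂ) * I))
      = ∫ x_ : ℝ in (0:ℝ)..(2*Real.pi), f ((x_:ℂ) + (c:ℂ) * I) := by
    linear_combination h
  have hpi : (0:ℝ) ≤ 2 * Real.pi := by positivity
  have key : (∫ x_ : ℝ in (0:ℝ)..(2*Real.pi), f (x_:ℂ))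
      = ∫ x_ : ℝ in (0:ℝ)..(2*Real.pi), f ((x_:ℂ) + (c:ℂ) * I) := by
    rw [← h2]; apply intervalIntegral.integral_congr; intro t _; simp
  have conv : ∀ g : ℝ → ℂ, (∫ t in Set.Ico (0:ℝ) (2*Real.pi), g t)
      = ∫ t in (0:ℝ)..(2*Real.pi), g t := by
    intro g
    rw [intervalIntegral.integral_of_le hpi, integral_Ico_eq_integral_Ioo,
      integral_Ioc_eq_integral_Ioo]
  rw [conv, conv, key]


noncomputable section

variable {V : Type*} [Fintype V]

instance MS.uniqueSub2 (w : V) : Unique {u : V // ¬ u ≠ w} :=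
  ⟨⟨⟨w, by simp⟩⟩, by rintro ⟨u, hu⟩; simp only [ne_eq, not_not] at hu; subst hu; rfl⟩

lemma MS.box_finite {ι : Type*} [Fintype ι] :
    volume (Set.univ.pi fun _ : ι => Set.Ico (0:ℝ) (2 * Real.pi)) < ⊤ := by
  rw [volume_pi, Measure.pi_pi]
  exact ENNReal.prod_lt_top fun i _ =>
    (by rw [Real.volume_Ico]; exact ENNReal.ofReal_lt_top : volume (Set.Ico (0:ℝ) (2*Real.pi)) < ⊤)

lemma MS.box_repr [DecidableEq V] (w : V) (H : (V → ℝ) → ℂ) (hc : Continuous H) (C : ℝ)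
    (hb : ∀ θ, ‖H θ‖ ≤ C) :
    ∫ θ in Set.univ.pi (fun _ : V => Set.Ico (0:ℝ) (2*Real.pi)), H θ
      = ∫ q in Set.univ.pi (fun _ : {u : V // u ≠ w} => Set.Ico (0:ℝ) (2*Real.pi)),
          ∫ t in Set.Ico (0:ℝ) (2*Real.pi),
            H (Function.update (fun v => if h : v ≠ w then q ⟨v, h⟩ else 0) w t) := by
  classical
  set B : Set (V → ℝ) := Set.univ.pi fun _ : V => Set.Ico (0:ℝ) (2*Real.pi) with hB
  set p : V → Prop := fun u => u ≠ w with hp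
  set e := MeasurableEquiv.piEquivPiSubtypeProd (fun _ : V => ℝ) p with he
  have mp : MeasurePreserving e.symm volume volume :=
    (volume_preserving_piEquivPiSubtypeProd (fun _ : V => ℝ) p).symm e
  have step1 : ∫ θ in B, H θ = ∫ q in e.symm ⁻¹' B, H (e.symm q) :=
    (mp.setIntegral_preimage_emb e.symm.measurableEmbedding H B).symm
  set S1 : Set ({u : V // p u} → ℝ) := Set.univ.pi fun _ => Set.Ico (0:ℝ) (2*Real.pi) with hS1
  set S2 : Set ({u : V // ¬ p u} → ℝ) := Set.univ.pi fun _ => Set.Ico (0:ℝ) (2*Real.pi) with hS2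
  have hesymm : ∀ (fg : ({u : V // p u} → ℝ) × ({u : V // ¬ p u} → ℝ)) (v : V),
      e.symm fg v = if h : p v then fg.1 ⟨v, h⟩ else fg.2 ⟨v, h⟩ := fun fg v => rfl
  have hset : e.symm ⁻¹' B = S1 ×ˢ S2 := by
    ext fg
    constructor
    · intro h
      constructor
      · intro u _
        have := h u (Set.mem_univ u); rwa [hesymm, dif_pos u.2] at this
      · intro u _
        have := h u (Set.mem_univ u); rwa [hesymm, dif_neg u.2] at this
    · rintro ⟨h1, h2⟩ v _
      rw [hesymm]
      by_cases h : p v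
      · rw [dif_pos h]; exact h1 ⟨v, h⟩ (Set.mem_univ _)
      · rw [dif_neg h]; exact h2 ⟨v, h⟩ (Set.mem_univ _)
  rw [step1, hset]
  have hS1m : MeasurableSet S1 := MeasurableSet.univ_pi fun _ => measurableSet_Ico
  have hS2m : MeasurableSet S2 := MeasurableSet.univ_pi fun _ => measurableSet_Ico
  have hfin : (volume.prod volume) (S1 ×ˢ S2) < ⊤ := by
    rw [Measure.prod_prod]
    exact ENNReal.mul_lt_top MS.box_finite MS.box_finite
  have hint : IntegrableOn (fun fg => H (e.symm fg)) (S1 ×ˢ S2) := by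
    refine Integrable.mono' (g := fun _ => C) ?_ ?_ ?_
    · exact integrableOn_const hfin.ne
    · exact ((hc.measurable.comp e.symm.measurable)).aestronglyMeasurable.restrict
    · exact Filter.Eventually.of_forall fun q => hb _
  rw [show ((volume : Measure (({u : V // p u} → ℝ) × ({u : V // ¬ p u} → ℝ)))) = volume.prod volume from rfl] at *
  rw [setIntegral_prod _ hint]
  -- now inner integral over S2
  refine setIntegral_congr_fun hS1m fun f _ => ?_
  -- ∫ g in S2, H (e.symm (f,g)) = ∫ t in Ico, H (update (ext f) w t)
  set u2 := MeasurableEquiv.funUnique {u : V // ¬ p u} ℝ with hu2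
  have mp2 : MeasurePreserving u2.symm volume volume := by
    have h := (volume_preserving_funUnique {u : V // ¬ p u} ℝ).symm u2
    have hfin : (Subtype.fintype fun u => ¬p u) = (Unique.fintype : Fintype {u : V // ¬ p u}) :=
      Subsingleton.elim _ _
    have hvol : @volume _ (@MeasureSpace.pi {u : V // ¬ p u} (Subtype.fintype fun u => ¬p u)
          (fun _ => ℝ) fun _ => Real.measureSpace)
        = @volume _ (@MeasureSpace.pi {u : V // ¬ p u} Unique.fintype
          (fun _ => ℝ) fun _ => Real.measureSpace) := by
      rw [hfin]
    rw [hvol]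
    exact h
  have step2 : ∫ g in u2.symm ⁻¹' S2, H (e.symm (f, u2.symm g)) = ∫ g in S2, H (e.symm (f, g)) :=
    mp2.setIntegral_preimage_emb u2.symm.measurableEmbedding (fun g => H (e.symm (f, g))) S2
  have hpre : u2.symm ⁻¹' S2 = Set.Ico (0:ℝ) (2*Real.pi) := by
    ext t
    simp only [Set.mem_preimage, hS2, Set.mem_pi, Set.mem_univ, true_implies]
    constructor
    · intro h; exact h default
    · intro h u; exact h
  rw [← step2, hpre]
  refine setIntegral_congr_fun measurableSet_Ico fun t _ => ?_
  congr 1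
  funext v
  rw [hesymm]
  by_cases h : p v
  · rw [dif_pos h, Function.update_of_ne h, dif_pos h]
  · rw [dif_neg h]
    have : v = w := not_not.mp h
    subst this
    rw [Function.update_self]
    rfl


noncomputable section
namespace MS
variable {V : Type*} [Fintype V]

open Classical in
def msP (G : SimpleGraph V) (β : ℝ) (x y : V) (z : V → ℂ) : ℂ :=
  Complex.I * (z x - z y) +
    ((β / 2 : ℝ) : ℂ) * ∑ u : V, ∑ v : V, if G.Adj u v then Complex.cos (z u - z v) else 0

def msF (G : SimpleGraph V) (β : ℝ) (x y : V) (z : V → ℂ) : ℂ := Complex.exp (msP G β x y z)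

open Classical in
def cS (a : V → ℝ) (s : Finset V) (θ : V → ℝ) : V → ℂ :=
  fun v => (θ v : ℂ) - (if v ∈ s then (a v : ℂ) * Complex.I else 0)

variable (G : SimpleGraph V) (β : ℝ) (x y : V)

lemma msF_update_diff [DecidableEq V] (c : V → ℂ) (w : V) :
    Differentiable ℂ (fun ζ => msF G β x y (Function.update c w ζ)) := by
  classical
  have hcoord : ∀ v, Differentiable ℂ fun ζ : ℂ => Function.update c w ζ v := by
    intro v
    by_cases h : v = w
    · simpa [Function.update_apply, h] using differentiable_id
    · simpa [Function.update_apply, h] using differentiable_const (c v)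
  apply Differentiable.cexp
  unfold msP
  apply Differentiable.add
  · exact ((hcoord x).sub (hcoord y)).const_mul _
  · apply Differentiable.const_mul
    apply Differentiable.fun_sum; intro u _
    apply Differentiable.fun_sum; intro v _
    by_cases h : G.Adj u v
    · simp only [if_pos h]
      exact ((hcoord u).sub (hcoord v)).ccos
    · simp only [if_neg h]
      exact differentiable_const _

lemma msF_update_period [DecidableEq V] (c : V → ℂ) (w : V) (ζ : ℂ) :
    msF G β x y (Function.update c w (ζ + 2 * (Real.pi : ℂ))) =
      msF G β x y (Function.update c w ζ) := by
  classical
  set e := Function.update c w ζ with hee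
  set e' := Function.update c w (ζ + 2 * (Real.pi : ℂ)) with hee'
  have he : ∀ v, e' v = e v + (if v = w then 2 * (Real.pi : ℂ) else 0) := by
    intro v; by_cases h : v = w <;> simp [hee, hee', Function.update_apply, h]
  have hcos : ∀ u v : V, Complex.cos (e' u - e' v) = Complex.cos (e u - e v) := by
    intro u v
    rw [he u, he v]
    by_cases hu : u = w <;> by_cases hv : v = w
    · rw [if_pos hu, if_pos hv]; congr 1; ring
    · rw [if_pos hu, if_neg hv, add_zero,
        show e u + 2 * (Real.pi : ℂ) - e v = e u - e v + 2 * (Real.pi : ℂ) by ring]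
      exact Complex.cos_periodic (e u - e v)
    · rw [if_neg hu, if_pos hv, add_zero,
        show e u - (e v + 2 * (Real.pi : ℂ)) = e u - e v - 2 * (Real.pi : ℂ) by ring]
      exact Complex.cos_periodic.sub_eq (e u - e v)
    · rw [if_neg hu, if_neg hv, add_zero, add_zero]
  unfold msF msP
  have hsum : (∑ u : V, ∑ v : V, if G.Adj u v then Complex.cos (e' u - e' v) else 0)
      = ∑ u : V, ∑ v : V, if G.Adj u v then Complex.cos (e u - e v) else 0 := by
    apply Finset.sum_congr rfl; intro u _
    apply Finset.sum_congr rfl; intro v _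
    by_cases h : G.Adj u v <;> simp [h, hcos]
  rw [hsum]
  have hxy : Complex.I * (e' x - e' y) = Complex.I * (e x - e y) +
      Complex.I * ((if x = w then 2 * (Real.pi : ℂ) else 0) - (if y = w then 2 * (Real.pi : ℂ) else 0)) := by
    rw [he x, he y]; ring
  rw [hxy, add_right_comm, Complex.exp_add]
  convert mul_one _ using 2
  by_cases hx : x = w <;> by_cases hy : y = w
  · rw [if_pos hx, if_pos hy, sub_self, mul_zero, Complex.exp_zero]
  · rw [if_pos hx, if_neg hy, sub_zero,
      show Complex.I * (2 * (Real.pi : ℂ)) = 2 * (Real.pi : ℂ) * Complex.I by ring]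
    exact Complex.exp_two_pi_mul_I
  · rw [if_neg hx, if_pos hy, zero_sub,
      show Complex.I * -(2 * (Real.pi : ℂ)) = -(2 * (Real.pi : ℂ) * Complex.I) by ring,
      Complex.exp_neg, Complex.exp_two_pi_mul_I, inv_one]
  · rw [if_neg hx, if_neg hy, sub_self, mul_zero, Complex.exp_zero]

open Classical in
lemma msP_re (z : V → ℂ) : (msP G β x y z).re =
    ((z y).im - (z x).im) + (β / 2) *
      ∑ u : V, ∑ v : V, if G.Adj u v then (Complex.cos (z u - z v)).re else 0 := by
  unfold msP
  rw [Complex.add_re, Complex.mul_re, Complex.mul_re]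
  simp only [Complex.I_re, Complex.I_im, Complex.ofReal_re, Complex.ofReal_im,
    Complex.sub_im, zero_mul, one_mul, zero_sub, neg_sub]
  rw [Complex.re_sum]
  have hs : ∀ u : V, (∑ v : V, if G.Adj u v then Complex.cos (z u - z v) else 0).re
      = ∑ v : V, if G.Adj u v then (Complex.cos (z u - z v)).re else 0 := fun u => by
    rw [Complex.re_sum]; exact Finset.sum_congr rfl fun v _ => apply_ite Complex.re _ _ _
  simp only [hs]
  ring

lemma MSnorm_ccos_le (z : ℂ) : ‖Complex.cos z‖ ≤ Real.cosh z.im := by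
  rw [show Complex.cos z = (Complex.exp (z * I) + Complex.exp (-z * I)) / 2 by
    rw [← Complex.two_cos]; ring]
  calc ‖(Complex.exp (z * I) + Complex.exp (-z * I)) / 2‖
      ≤ (‖Complex.exp (z * I)‖ + ‖Complex.exp (-z * I)‖) / 2 := by
        rw [norm_div, Complex.norm_two]; gcongr; exact norm_add_le _ _
    _ = (Real.exp (-z.im) + Real.exp z.im) / 2 := by
        rw [Complex.norm_exp, Complex.norm_exp]; simp [Complex.mul_re]
    _ = Real.cosh z.im := by rw [Real.cosh_eq]; ring

open Classical in
def msC (G : SimpleGraph V) (β : ℝ) (a : V → ℝ) (x y : V) : ℝ :=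
  Real.exp (|a x| + |a y| + (β/2) *
    ∑ u : V, ∑ v : V, if G.Adj u v then Real.cosh (|a u| + |a v|) else 0)

open Classical in
lemma cS_im (a : V → ℝ) (s : Finset V) (θ : V → ℝ) (v : V) :
    (cS a s θ v).im = -(if v ∈ s then a v else 0) := by
  classical
  unfold cS
  by_cases h : v ∈ s <;> simp [h]

lemma norm_msF_cS_le (hβ : 0 ≤ β) (a : V → ℝ) (s : Finset V) (θ : V → ℝ) :
    ‖msF G β x y (cS a s θ)‖ ≤ msC G β a x y := by
  classical
  unfold msF msC
  rw [Complex.norm_exp, Real.exp_le_exp, msP_re]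
  have him : ∀ v : V, |(cS a s θ v).im| ≤ |a v| := by
    intro v
    rw [cS_im]
    by_cases h : v ∈ s <;> simp [h, abs_nonneg]
  apply add_le_add
  · have h1 := him x
    have h2 := him y
    have h3 := le_abs_self (cS a s θ y).im
    have h4 := neg_abs_le (cS a s θ x).im
    linarith
  · apply mul_le_mul_of_nonneg_left _ (by linarith : (0:ℝ) ≤ β/2)
    apply Finset.sum_le_sum; intro u _
    apply Finset.sum_le_sum; intro v _
    by_cases h : G.Adj u v
    · rw [if_pos h, if_pos h]
      calc (Complex.cos (cS a s θ u - cS a s θ v)).re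
          ≤ ‖Complex.cos (cS a s θ u - cS a s θ v)‖ := Complex.re_le_norm _
        _ ≤ Real.cosh ((cS a s θ u - cS a s θ v).im) := MSnorm_ccos_le _
        _ ≤ Real.cosh (|a u| + |a v|) := by
            rw [Real.cosh_le_cosh]
            rw [_root_.abs_of_nonneg (by positivity : (0:ℝ) ≤ |a u| + |a v|)]
            rw [Complex.sub_im]
            calc |(cS a s θ u).im - (cS a s θ v).im|
                ≤ |(cS a s θ u).im| + |(cS a s θ v).im| := abs_sub _ _
              _ ≤ |a u| + |a v| := add_le_add (him u) (him v)
    · simp [h]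

lemma continuous_msF_cS (a : V → ℝ) (s : Finset V) :
    Continuous fun θ : V → ℝ => msF G β x y (cS a s θ) := by
  classical
  have hcS : Continuous (cS a s) := by
    apply continuous_pi; intro v
    exact (Complex.continuous_ofReal.comp (continuous_apply v)).sub continuous_const
  have hmsF : Continuous (msF G β x y) := by
    unfold msF msP
    apply Complex.continuous_exp.comp
    apply Continuous.add
    · exact continuous_const.mul ((continuous_apply x).sub (continuous_apply y))
    · apply Continuous.mul continuous_const
      apply continuous_finset_sum; intro u _
      apply continuous_finset_sum; intro v _
      by_cases h : G.Adj u v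
      · simp only [if_pos h]
        exact Complex.continuous_cos.comp ((continuous_apply u).sub (continuous_apply v))
      · simp only [if_neg h]; exact continuous_const
  exact hmsF.comp hcS

lemma integrableOn_box {E : Type*} [NormedAddCommGroup E] (f : (V → ℝ) → E)
    (hc : Continuous f) (C : ℝ) (hb : ∀ θ, ‖f θ‖ ≤ C) :
    IntegrableOn f (Set.univ.pi fun _ : V => Set.Ico (0:ℝ) (2 * Real.pi)) volume :=
  Integrable.mono' (integrableOn_const box_finite.ne)
    hc.aestronglyMeasurable.restrict (Filter.Eventually.of_forall hb)

lemma integral_cS (hβ : 0 ≤ β) (a : V → ℝ) (s : Finset V) :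
    ∫ θ in Set.univ.pi (fun _ : V => Set.Ico (0:ℝ) (2*Real.pi)), msF G β x y (cS a s θ)
      = ∫ θ in Set.univ.pi (fun _ : V => Set.Ico (0:ℝ) (2*Real.pi)), msF G β x y (cS a ∅ θ) := by
  classical
  induction s using Finset.induction_on with
  | empty => rfl
  | @insert w s hw ih =>
    rw [← ih]
    rw [box_repr w (fun θ => msF G β x y (cS a (insert w s) θ))
        (continuous_msF_cS G β x y a _) (msC G β a x y) (fun θ => norm_msF_cS_le G β x y hβ a _ θ),
      box_repr w (fun θ => msF G β x y (cS a s θ))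
        (continuous_msF_cS G β x y a _) (msC G β a x y) (fun θ => norm_msF_cS_le G β x y hβ a _ θ)]
    apply setIntegral_congr_fun (MeasurableSet.univ_pi fun _ => measurableSet_Ico)
    intro q _
    set θb : V → ℝ := fun v => if h : v ≠ w then q ⟨v, h⟩ else 0 with hθb
    set f : ℂ → ℂ := fun ζ => msF G β x y (Function.update (cS a s θb) w ζ) with hf
    have hL : ∀ t : ℝ, msF G β x y (cS a (insert w s) (Function.update θb w t))
        = f ((t : ℂ) + ((-(a w) : ℝ) : ℂ) * Complex.I) := by
      intro t
      show _ = msF G β x y (Function.update (cS a s θb) w _)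
      congr 1
      funext v
      by_cases h : v = w
      · subst h
        simp only [cS, Function.update_self, Finset.mem_insert, true_or, if_pos]
        push_cast; ring
      · simp [cS, Function.update_of_ne h, Finset.mem_insert, h]
    have hR : ∀ t : ℝ, msF G β x y (cS a s (Function.update θb w t)) = f ((t : ℂ)) := by
      intro t
      show _ = msF G β x y (Function.update (cS a s θb) w _)
      congr 1
      funext v
      by_cases h : v = w
      · subst h; simp [cS, Function.update_self, hw]
      · simp [cS, Function.update_of_ne h]
    calc ∫ t in Set.Ico (0:ℝ) (2*Real.pi), msF G β x y (cS a (insert w s) (Function.update θb w t))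
        = ∫ t in Set.Ico (0:ℝ) (2*Real.pi), f ((t:ℂ) + ((-(a w) : ℝ):ℂ) * Complex.I) :=
          setIntegral_congr_fun measurableSet_Ico fun t _ => hL t
      _ = ∫ t in Set.Ico (0:ℝ) (2*Real.pi), f (t : ℂ) :=
          shift_integral f (msF_update_diff G β x y _ w)
            (fun z => msF_update_period G β x y _ w z) (-(a w))
      _ = ∫ t in Set.Ico (0:ℝ) (2*Real.pi), msF G β x y (cS a s (Function.update θb w t)) :=
          setIntegral_congr_fun measurableSet_Ico fun t _ => (hR t).symm
end MS

end
end

section Final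
open Complex MS
variable {V : Type*} [Fintype V]

open Classical in
noncomputable def msK (G : SimpleGraph V) : ℝ :=
  (1/2) * ∑ u : V, ∑ v : V, if G.Adj u v then (1:ℝ) else 0

lemma xyH_abs_le (G : SimpleGraph V) (θ : V → ℝ) : |xyHamiltonian G θ| ≤ msK G := by
  classical
  unfold xyHamiltonian msK
  rw [abs_neg, abs_mul, _root_.abs_of_nonneg (by norm_num : (0:ℝ) ≤ 1/2)]
  apply mul_le_mul_of_nonneg_left _ (by norm_num)
  calc |∑ u : V, ∑ v : V, if G.Adj u v then Real.cos (θ u - θ v) else 0|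
      ≤ ∑ u : V, |∑ v : V, if G.Adj u v then Real.cos (θ u - θ v) else 0| :=
        Finset.abs_sum_le_sum_abs _ _
    _ ≤ ∑ u : V, ∑ v : V, |if G.Adj u v then Real.cos (θ u - θ v) else 0| :=
        Finset.sum_le_sum fun u _ => Finset.abs_sum_le_sum_abs _ _
    _ ≤ ∑ u : V, ∑ v : V, if G.Adj u v then (1:ℝ) else 0 := by
        apply Finset.sum_le_sum; intro u _
        apply Finset.sum_le_sum; intro v _
        split_ifs with h
        · exact Real.abs_cos_le_one _
        · simp

lemma cont_Zf (G : SimpleGraph V) (β : ℝ) :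
    Continuous fun θ : V → ℝ => Real.exp (-β * xyHamiltonian G θ) := by
  classical
  apply Real.continuous_exp.comp
  apply Continuous.mul continuous_const
  unfold xyHamiltonian
  apply Continuous.neg
  apply Continuous.mul continuous_const
  apply continuous_finset_sum; intro u _
  apply continuous_finset_sum; intro v _
  by_cases h : G.Adj u v
  · simp only [if_pos h]
    exact Real.continuous_cos.comp ((continuous_apply u).sub (continuous_apply v))
  · simp only [if_neg h]; exact continuous_const

lemma Zf_le (G : SimpleGraph V) {β : ℝ} (hβ : 0 ≤ β) (θ : V → ℝ) :
    Real.exp (-β * xyHamiltonian G θ) ≤ Real.exp (β * msK G) := by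
  apply Real.exp_le_exp.mpr
  have h1 := xyH_abs_le G θ
  have h2 := neg_abs_le (xyHamiltonian G θ)
  nlinarith

lemma Zf_ge (G : SimpleGraph V) {β : ℝ} (hβ : 0 ≤ β) (θ : V → ℝ) :
    Real.exp (-(β * msK G)) ≤ Real.exp (-β * xyHamiltonian G θ) := by
  apply Real.exp_le_exp.mpr
  have h1 := xyH_abs_le G θ
  have h2 := le_abs_self (xyHamiltonian G θ)
  nlinarith

lemma msF_empty_re (G : SimpleGraph V) (β : ℝ) (x y : V) (a : V → ℝ) (θ : V → ℝ) :
    (msF G β x y (cS a ∅ θ)).re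
      = Real.cos (θ x - θ y) * Real.exp (-β * xyHamiltonian G θ) := by
  classical
  have hz : cS a ∅ θ = fun v => ((θ v : ℝ) : ℂ) := by
    funext v; simp [cS]
  rw [hz]
  unfold msF
  rw [Complex.exp_re]
  have h1 : (msP G β x y fun v => ((θ v : ℝ) : ℂ)).re = -β * xyHamiltonian G θ := by
    rw [msP_re]
    simp only [Complex.ofReal_im, sub_zero, zero_sub, neg_zero, zero_add]
    have hs : ∀ u v : V, (Complex.cos ((θ u : ℂ) - (θ v : ℂ))).re = Real.cos (θ u - θ v) := by
      intro u v
      rw [← Complex.ofReal_sub, Complex.cos_ofReal_re]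
    unfold xyHamiltonian
    rw [show (∑ u : V, ∑ v : V, if G.Adj u v then (Complex.cos ((θ u : ℂ) - (θ v : ℂ))).re else 0)
        = ∑ u : V, ∑ v : V, if G.Adj u v then Real.cos (θ u - θ v) else 0 from
      Finset.sum_congr rfl fun u _ => Finset.sum_congr rfl fun v _ => by
        split_ifs with h; exacts [hs u v, rfl]]
    ring
  have h2 : (msP G β x y fun v => ((θ v : ℝ) : ℂ)).im = θ x - θ y := by
    unfold msP
    rw [Complex.add_im, Complex.mul_im, Complex.mul_im]
    simp only [Complex.I_re, Complex.I_im, Complex.ofReal_re, Complex.ofReal_im,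
      Complex.sub_re, Complex.sub_im, zero_mul, one_mul, add_zero, zero_add, mul_zero]
    have him : (∑ u : V, ∑ v : V, if G.Adj u v then Complex.cos ((θ u : ℂ) - (θ v : ℂ)) else 0).im = 0 := by
      rw [Complex.im_sum]
      apply Finset.sum_eq_zero; intro u _
      rw [Complex.im_sum]
      apply Finset.sum_eq_zero; intro v _
      split_ifs with h
      · rw [← Complex.ofReal_sub, Complex.cos_ofReal_im]
      · rfl
    rw [him]
    ring
  rw [h1, h2]
  ring

lemma key_est (G : SimpleGraph V) {β : ℝ} (hβ : 0 ≤ β) (x y : V) (a : V → ℝ)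
    (hstep : ∀ u v : V, G.Adj u v → |a u - a v| ≤ 1 / 10)
    (henergy : β * edgeEnergy G a ≤ (a y - a x) / 2) (θ : V → ℝ) :
    ‖msF G β x y (cS a Finset.univ θ)‖
      ≤ Real.exp (-(a y - a x)/2) * Real.exp (-β * xyHamiltonian G θ) := by
  classical
  unfold msF
  rw [Complex.norm_exp, ← Real.exp_add, Real.exp_le_exp, msP_re]
  have him : ∀ v : V, (cS a Finset.univ θ v).im = -a v := by
    intro v; rw [cS_im]; simp
  have hterm : ∀ u v : V, G.Adj u v →
      (Complex.cos (cS a Finset.univ θ u - cS a Finset.univ θ v)).re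
        ≤ Real.cos (θ u - θ v) + (a u - a v) ^ 2 := by
    intro u v hadj
    have hre : ∀ w : V, (cS a Finset.univ θ w).re = θ w := by
      intro w; simp [cS]
    have harg : cS a Finset.univ θ u - cS a Finset.univ θ v
        = ((θ u - θ v : ℝ) : ℂ) + ((a v - a u : ℝ) : ℂ) * Complex.I := by
      apply Complex.ext
      · simp [Complex.sub_re, hre, Complex.add_re, Complex.mul_re]
      · simp [Complex.sub_im, him, Complex.add_im, Complex.mul_im]; ring
    rw [harg, MS.ccos_re]
    have hq : |a u - a v| ≤ 1/10 := hstep u v hadj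
    have hcosh : Real.cosh (a v - a u) ≤ 1 + (a u - a v) ^ 2 := by
      have : |a v - a u| ≤ 1/10 := by rwa [abs_sub_comm]
      have h := MS.cosh_le_one_add_sq this
      calc Real.cosh (a v - a u) ≤ 1 + (a v - a u) ^ 2 := h
        _ = 1 + (a u - a v) ^ 2 := by ring
    have hc1 : Real.cos (θ u - θ v) ≤ 1 := Real.cos_le_one _
    have hch1 : 1 ≤ Real.cosh (a v - a u) := Real.one_le_cosh _
    nlinarith [sq_nonneg (a u - a v)]
  have hsplit : ∀ u v : V,
      (if G.Adj u v then Real.cos (θ u - θ v) + (a u - a v) ^ 2 else 0)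
        = (if G.Adj u v then Real.cos (θ u - θ v) else 0)
          + (if G.Adj u v then (a u - a v) ^ 2 else 0) := by
    intro u v; split_ifs <;> simp
  have hsum : (∑ u : V, ∑ v : V, if G.Adj u v then
        (Complex.cos (cS a Finset.univ θ u - cS a Finset.univ θ v)).re else 0)
      ≤ (∑ u : V, ∑ v : V, if G.Adj u v then Real.cos (θ u - θ v) else 0)
        + ∑ u : V, ∑ v : V, if G.Adj u v then (a u - a v) ^ 2 else 0 := by
    rw [← Finset.sum_add_distrib]
    apply Finset.sum_le_sum; intro u _
    rw [← Finset.sum_add_distrib]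
    apply Finset.sum_le_sum; intro v _
    rw [← hsplit]
    split_ifs with h
    · exact hterm u v h
    · exact le_rfl
  have h0 : (cS a Finset.univ θ y).im - (cS a Finset.univ θ x).im = -(a y - a x) := by
    rw [him, him]; ring
  rw [h0]
  have hβ2 : (0:ℝ) ≤ β/2 := by linarith
  have hmul := mul_le_mul_of_nonneg_left hsum hβ2
  have hee : (β/2) * (∑ u : V, ∑ v : V, if G.Adj u v then (a u - a v) ^ 2 else 0)
      = β * edgeEnergy G a := by
    unfold edgeEnergy; ring
  have hxyh : (β/2) * (∑ u : V, ∑ v : V, if G.Adj u v then Real.cos (θ u - θ v) else 0)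
      = -β * xyHamiltonian G θ := by
    unfold xyHamiltonian; ring
  nlinarith [hmul, henergy]

end Final

/-- McBryan–Spencer exponential decay bound for the XY model on a finite graph. -/
theorem mcbryan_spencer_decay {V : Type*} [Fintype V] (G : SimpleGraph V)
    (β : ℝ) (hβ : 0 < β) (x y : V) (a : V → ℝ) (m : ℝ)
    (hstep : ∀ u v : V, G.Adj u v → |a u - a v| ≤ 1 / 10)
    (henergy : β * edgeEnergy G a ≤ (a y - a x) / 2)
    (hm : m ≤ a y - a x) :
    |(∫ θ in Set.univ.pi fun _ : V => Set.Ico (0 : ℝ) (2 * Real.pi),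
        Real.cos (θ x - θ y) * Real.exp (-β * xyHamiltonian G θ)) /
      (∫ θ in Set.univ.pi fun _ : V => Set.Ico (0 : ℝ) (2 * Real.pi),
        Real.exp (-β * xyHamiltonian G θ))|
      ≤ Real.exp (-m / 2) := by
  classical
  set B := Set.univ.pi fun _ : V => Set.Ico (0:ℝ) (2 * Real.pi) with hB
  set Z := ∫ θ in B, Real.exp (-β * xyHamiltonian G θ) with hZ
  set Nr := ∫ θ in B, Real.cos (θ x - θ y) * Real.exp (-β * xyHamiltonian G θ) with hNr
  have hZc := cont_Zf G β
  have hZb : ∀ θ : V → ℝ, ‖Real.exp (-β * xyHamiltonian G θ)‖ ≤ Real.exp (β * msK G) := by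
    intro θ
    rw [Real.norm_eq_abs, _root_.abs_of_pos (Real.exp_pos _)]
    exact Zf_le G hβ.le θ
  have hZint : IntegrableOn (fun θ => Real.exp (-β * xyHamiltonian G θ)) B volume :=
    MS.integrableOn_box _ hZc _ hZb
  have hBm : MeasurableSet B := MeasurableSet.univ_pi fun _ => measurableSet_Ico
  have hvolpos : 0 < (volume B).toReal := by
    rw [hB, volume_pi, Measure.pi_pi]
    rw [ENNReal.toReal_prod]
    apply Finset.prod_pos; intro i _
    rw [Real.volume_Ico, sub_zero, ENNReal.toReal_ofReal (by positivity)]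
    positivity
  have hZpos : 0 < Z := by
    have hge := setIntegral_ge_of_const_le hBm (ne_of_lt MS.box_finite)
      (fun θ _ => Zf_ge G hβ.le θ) hZint
    calc (0:ℝ) < Real.exp (-(β * msK G)) * (volume B).toReal := by positivity
      _ ≤ Z := by rw [smul_eq_mul, mul_comm] at hge; exact hge
  have hFint : ∀ s : Finset V, IntegrableOn (fun θ => MS.msF G β x y (MS.cS a s θ)) B volume :=
    fun s => MS.integrableOn_box _ (MS.continuous_msF_cS G β x y a s) _
      (fun θ => MS.norm_msF_cS_le G β x y hβ.le a s θ)
  have hNr1 : Nr = (∫ θ in B, MS.msF G β x y (MS.cS a ∅ θ)).re := by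
    rw [hNr]
    have := integral_re (μ := volume.restrict B) (f := fun θ => MS.msF G β x y (MS.cS a ∅ θ)) (hFint ∅)
    simp only [RCLike.re_to_complex] at this
    rw [← this]
    apply setIntegral_congr_fun hBm
    intro θ _
    exact (msF_empty_re G β x y a θ).symm
  have hNr2 : Nr = (∫ θ in B, MS.msF G β x y (MS.cS a Finset.univ θ)).re := by
    rw [hNr1]
    have heq := MS.integral_cS G β x y hβ.le a Finset.univ
    rw [hB]
    exact congrArg Complex.re heq.symm
  have hbound : |Nr| ≤ Real.exp (-(a y - a x)/2) * Z := by
    rw [hNr2]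
    calc |(∫ θ in B, MS.msF G β x y (MS.cS a Finset.univ θ)).re|
        ≤ ‖∫ θ in B, MS.msF G β x y (MS.cS a Finset.univ θ)‖ :=
          Complex.abs_re_le_norm _
      _ = ‖∫ θ in B, MS.msF G β x y (MS.cS a Finset.univ θ)‖ := rfl
      _ ≤ ∫ θ in B, ‖MS.msF G β x y (MS.cS a Finset.univ θ)‖ :=
          norm_integral_le_integral_norm _
      _ ≤ ∫ θ in B, Real.exp (-(a y - a x)/2) * Real.exp (-β * xyHamiltonian G θ) := by
          apply integral_mono ((hFint Finset.univ).norm) (hZint.const_mul _)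
          intro θ
          exact key_est G hβ.le x y a hstep henergy θ
      _ = Real.exp (-(a y - a x)/2) * Z := by rw [hZ, integral_const_mul]
  rw [abs_div, _root_.abs_of_pos hZpos, div_le_iff₀ hZpos]
  calc |Nr| ≤ Real.exp (-(a y - a x)/2) * Z := hbound
    _ ≤ Real.exp (-m/2) * Z := by
        apply mul_le_mul_of_nonneg_right _ hZpos.le
        apply Real.exp_le_exp.mpr; linarith
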